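/- (Strict Plünnecke inequality) Let A be a finite nonempty subset of a commutative group Z with σ(A) > 1 (i.e., |A+A| > |A|). Then for all n ≥ 1, |nA| < σ(A)ⁿ·|A|, i.e., |nA|·|A|^(n−1) < |A+A|ⁿ. -/

import Mathlib

open Pointwise Finset

private lemma aux_petridis_iter {Z : Type*} [AddCommGroup Z] [DecidableEq Z] {A : Finset Z}
    (hA : A.Nonempty)
    (hAB : ∀ A' ⊆ A, (A + A).card * A'.card ≤ (A' + A).card * A.card) :
    ∀ n : ℕ, (((n + 1) • A).card : ℚ≥0) ≤ (((A + A).card : ℚ≥0) / A.card) ^ n * A.card := by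
  have hA0 : (0 : ℚ≥0) < (A.card : ℚ≥0) := by exact_mod_cast hA.card_pos
  intro n
  induction n with
  | zero => simp [one_nsmul]
  | succ n ih =>
      have e1 : (n + 2) • A = A + A + n • A := by
        rw [show n + 2 = 1 + 1 + n by ring, add_nsmul, add_nsmul, one_nsmul]
      have e2 : (n + 1) • A = A + n • A := by
        rw [add_nsmul, one_nsmul, add_comm]
      have h1 : ((n + 2) • A).card * A.card ≤ (A + A).card * ((n + 1) • A).card := by
        rw [e1, e2]
        have h := Finset.pluennecke_petridis_inequality_add (n • A) hAB
        rwa [add_comm (n • A) A, add_comm (A + n • A) A, ← add_assoc] at h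
      refine le_of_mul_le_mul_right ?_ hA0
      calc (((n + 2) • A).card * A.card : ℚ≥0)
          ≤ ((A + A).card : ℚ≥0) * ((n + 1) • A).card := by exact_mod_cast h1
        _ ≤ ((A + A).card : ℚ≥0) * ((((A + A).card : ℚ≥0) / A.card) ^ n * A.card) := by
            gcongr
        _ = (((A + A).card : ℚ≥0) / A.card) ^ (n + 1) * A.card * A.card := by
            field_simp
            rw [pow_succ, mul_comm _ (((A + A).card : ℚ≥0) / A.card), ← mul_assoc, mul_div_assoc',
              mul_comm ((A.card : ℚ≥0)) ((A + A).card : ℚ≥0), mul_div_assoc, div_self hA0.ne', mul_one]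

theorem stmt_12 {Z : Type*} [AddCommGroup Z] [DecidableEq Z] (A : Finset Z)
    (hA : A.Nonempty) (hσ : A.card < (A + A).card) (n : ℕ) (hn : 1 ≤ n) :
    (n • A).card * A.card ^ (n - 1) < (A + A).card ^ n := by
  obtain ⟨m, rfl⟩ : ∃ m, n = m + 1 := ⟨n - 1, (Nat.succ_pred_eq_of_pos hn).symm⟩
  have hA0 : (0 : ℚ≥0) < (A.card : ℚ≥0) := by exact_mod_cast hA.card_pos
  set K : ℚ≥0 := ((A + A).card : ℚ≥0) / A.card with hK
  have hK1 : 1 < K := by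
    rw [hK, lt_div_iff₀ hA0, one_mul]
    exact_mod_cast hσ
  have hmain : ((((m + 1) • A).card : ℚ≥0)) < K ^ (m + 1) * A.card := by
    by_cases hcond : ∀ A' ⊆ A, (A + A).card * A'.card ≤ (A' + A).card * A.card
    · have h := aux_petridis_iter hA hcond m
      refine h.trans_lt ?_
      have hpow : K ^ m < K ^ (m + 1) := pow_lt_pow_right₀ hK1 (Nat.lt_succ_self m)
      exact mul_lt_mul_of_pos_right hpow hA0
    · push_neg at hcond
      obtain ⟨A', hA'sub, hlt⟩ := hcond
      have h0 : 0 < A'.card := by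
        rcases Nat.eq_zero_or_pos A'.card with h | h
        · simp [h] at hlt
        · exact h
      have hA'0 : (0 : ℚ≥0) < (A'.card : ℚ≥0) := by exact_mod_cast h0
      have hA'ne : A'.Nonempty := card_pos.mp h0
      have hple := Finset.pluennecke_ruzsa_inequality_nsmul_add hA'ne A (m + 1)
      refine hple.trans_lt ?_
      have hR : ((A' + A).card : ℚ≥0) / A'.card < K := by
        rw [hK, div_lt_div_iff₀ hA'0 hA0]
        exact_mod_cast hlt
      calc (((A' + A).card : ℚ≥0) / A'.card) ^ (m + 1) * A'.card
          ≤ (((A' + A).card : ℚ≥0) / A'.card) ^ (m + 1) * A.card := by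
            gcongr
        _ < K ^ (m + 1) * A.card :=
            mul_lt_mul_of_pos_right
              (pow_lt_pow_left₀ hR (by positivity) (Nat.succ_ne_zero m)) hA0
  have final : ((((m + 1) • A).card : ℚ≥0)) * (A.card : ℚ≥0) ^ m
      < ((A + A).card : ℚ≥0) ^ (m + 1) := by
    calc ((((m + 1) • A).card : ℚ≥0)) * (A.card : ℚ≥0) ^ m
        < (K ^ (m + 1) * A.card) * (A.card : ℚ≥0) ^ m :=
          mul_lt_mul_of_pos_right hmain (pow_pos hA0 m)
      _ = ((A + A).card : ℚ≥0) ^ (m + 1) := by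
          rw [hK, div_pow, mul_assoc, ← pow_succ', div_mul_cancel₀ _ (pow_ne_zero _ hA0.ne')]
  simp only [Nat.add_sub_cancel]
  exact_mod_cast final
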